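/- Let (X, 𝒜, μ) be a probability space and let {E_i}_{i∈ℕ} be a sequence of measurable subsets of X. Suppose there exists a constant C' > 0 such that for any ε > 0 there exist 0 < ε* < ε and a sequence of finite subsets S_k^ε ⊆ ℕ with min S_k^ε → +∞ as k → ∞, such that for all sufficiently large k one has ε* ≤ ∑_{i∈S_k^ε} μ(E_i) ≤ ε and ∑_{s<t, s,t∈S_k^ε} μ(E_s ∩ E_t) ≤ C' (∑_{i∈S_k^ε} μ(E_i))². Furthermore suppose property (M2) holds: for any δ > 0 and every pair of integers q₁ < q₂, setting A = ⋃_{j=q₁}^{q₂} E_j, there exists k₀ = k₀(q₁,q₂,δ) such that for all k ≥ k₀ one has μ(A ∩ ⋃_{i∈S_k^ε} E_i) ≤ (1+δ) μ(A) ∑_{i∈S_k^ε} μ(E_i). Then μ(E_∞) = 1. -/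

import Mathlib

open MeasureTheory Filter ENNReal Topology

lemma chung_erdos {X : Type*} [MeasurableSpace X] (μ : Measure X)
    (E : ℕ → Set X) (hE : ∀ i, MeasurableSet (E i)) (S : Finset ℕ) :
    (∑ i ∈ S, μ (E i)) ^ 2 ≤
      μ (⋃ i ∈ S, E i) * ∑ s ∈ S, ∑ t ∈ S, μ (E s ∩ E t) := by
  set A : Set X := ⋃ i ∈ S, E i with hA
  have hAm : MeasurableSet A := MeasurableSet.biUnion S.countable_toSet (fun i _ => hE i)
  set f : X → ℝ≥0∞ := fun x => ∑ i ∈ S, (E i).indicator 1 x with hf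
  have hfm : Measurable f := by
    apply Finset.measurable_sum
    exact fun i _ => (measurable_one.indicator (hE i))
  set g : X → ℝ≥0∞ := A.indicator 1 with hg
  have hgm : Measurable g := measurable_one.indicator hAm
  have hfg : ∀ x, (f * g) x = f x := by
    intro x
    by_cases hx : x ∈ A
    · simp [hg, Set.indicator_of_mem hx]
    · have hfx : f x = 0 := by
        apply Finset.sum_eq_zero
        intro i hi
        have : x ∉ E i := fun hxe => hx (Set.mem_biUnion hi hxe)
        simp [Set.indicator_of_notMem this]
      simp [hfx]
  have hint_f : ∫⁻ x, f x ∂μ = ∑ i ∈ S, μ (E i) := by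
    rw [hf]
    rw [lintegral_finset_sum _ (fun i _ => measurable_one.indicator (hE i))]
    refine Finset.sum_congr rfl fun i _ => ?_
    rw [lintegral_indicator_one (hE i)]
  have hint_f2 : ∫⁻ x, f x ^ (2:ℝ) ∂μ = ∑ s ∈ S, ∑ t ∈ S, μ (E s ∩ E t) := by
    have : ∀ x, f x ^ (2:ℝ) = ∑ s ∈ S, ∑ t ∈ S, ((E s ∩ E t).indicator 1 x : ℝ≥0∞) := by
      intro x
      rw [ENNReal.rpow_two, sq, hf]
      rw [Finset.sum_mul_sum]
      refine Finset.sum_congr rfl fun s _ => Finset.sum_congr rfl fun t _ => ?_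
      by_cases hs : x ∈ E s <;> by_cases ht : x ∈ E t <;>
        simp [Set.indicator, hs, ht, Set.mem_inter_iff]
    simp_rw [this]
    rw [lintegral_finset_sum _ (fun s _ => Finset.measurable_sum _
      (fun t _ => measurable_one.indicator ((hE s).inter (hE t))))]
    refine Finset.sum_congr rfl fun s _ => ?_
    rw [lintegral_finset_sum _ (fun t _ => measurable_one.indicator ((hE s).inter (hE t)))]
    exact Finset.sum_congr rfl fun t _ => lintegral_indicator_one ((hE s).inter (hE t))
  have hpq : Real.HolderConjugate 2 2 := Real.HolderConjugate.two_two
  have holder := ENNReal.lintegral_mul_le_Lp_mul_Lq μ hpq hfm.aemeasurable hgm.aemeasurable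
  have hgl : ∫⁻ x, g x ^ (2:ℝ) ∂μ = μ A := by
    have : ∀ x, g x ^ (2:ℝ) = A.indicator 1 x := by
      intro x
      by_cases hx : x ∈ A <;> simp [hg, Set.indicator, hx]
    simp_rw [this]
    exact lintegral_indicator_one hAm
  have hfgl : ∫⁻ x, (f * g) x ∂μ = ∑ i ∈ S, μ (E i) := by
    rw [← hint_f]; exact lintegral_congr hfg
  rw [hfgl, hint_f2, hgl] at holder
  have hsq := ENNReal.rpow_le_rpow holder (by norm_num : (0:ℝ) ≤ 2)
  rw [ENNReal.mul_rpow_of_nonneg _ _ (by norm_num : (0:ℝ) ≤ 2)] at hsq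
  have e1 : ∀ x : ℝ≥0∞, (x ^ ((1:ℝ)/2)) ^ (2:ℝ) = x := by
    intro x; rw [← ENNReal.rpow_mul]; norm_num
  rw [e1, e1, ENNReal.rpow_two] at hsq
  rw [mul_comm] at hsq
  exact hsq

lemma pair_decomp (S : Finset ℕ) (p : ℕ → ℕ → ℝ) (hsymm : ∀ s t, p s t = p t s) :
    ∑ s ∈ S, ∑ t ∈ S, p s t
      = ∑ s ∈ S, p s s + 2 * ∑ s ∈ S, ∑ t ∈ S, (if s < t then p s t else 0) := by
  have split : ∀ s t : ℕ, p s t = (if s < t then p s t else 0)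
      + (if t < s then p s t else 0) + (if s = t then p s t else 0) := by
    intro s t
    rcases lt_trichotomy s t with h | h | h
    · simp [h, h.ne, asymm h]
    · simp [h, lt_irrefl]
    · simp [h, h.ne', asymm h]
  have h2 : ∑ s ∈ S, ∑ t ∈ S, (if t < s then p s t else 0)
      = ∑ s ∈ S, ∑ t ∈ S, (if s < t then p s t else 0) := by
    rw [Finset.sum_comm]
    exact Finset.sum_congr rfl fun s _ => Finset.sum_congr rfl fun t _ => by rw [hsymm]
  have h3 : ∑ s ∈ S, ∑ t ∈ S, (if s = t then p s t else 0) = ∑ s ∈ S, p s s :=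
    Finset.sum_congr rfl fun s hs => by rw [Finset.sum_ite_eq S s (p s), if_pos hs]
  calc ∑ s ∈ S, ∑ t ∈ S, p s t
      = ∑ s ∈ S, ∑ t ∈ S, ((if s < t then p s t else 0)
        + (if t < s then p s t else 0) + (if s = t then p s t else 0)) :=
        Finset.sum_congr rfl fun s _ => Finset.sum_congr rfl fun t _ => split s t
    _ = (∑ s ∈ S, ∑ t ∈ S, (if s < t then p s t else 0))
        + (∑ s ∈ S, ∑ t ∈ S, (if t < s then p s t else 0))
        + (∑ s ∈ S, ∑ t ∈ S, (if s = t then p s t else 0)) := by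
        simp [Finset.sum_add_distrib]
    _ = ∑ s ∈ S, p s s + 2 * ∑ s ∈ S, ∑ t ∈ S, (if s < t then p s t else 0) := by
        rw [h2, h3]; ring

/-- **Borel--Cantelli with grouped events and property (M2)** (Theorem 3). -/
theorem borel_cantelli_M2_full_measure
    {X : Type*} [MeasurableSpace X] (μ : Measure X) [IsProbabilityMeasure μ]
    (E : ℕ → Set X) (hE : ∀ i, MeasurableSet (E i))
    (C' : ℝ) (hC' : 0 < C')
    (h : ∀ ε : ℝ, 0 < ε → ∃ εs : ℝ, 0 < εs ∧ εs < ε ∧ ∃ S : ℕ → Finset ℕ,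
      (∀ N : ℕ, ∀ᶠ k in atTop, ∀ i ∈ S k, N ≤ i) ∧
      (∀ᶠ k in atTop,
        εs ≤ ∑ i ∈ S k, (μ (E i)).toReal ∧ ∑ i ∈ S k, (μ (E i)).toReal ≤ ε) ∧
      (∀ᶠ k in atTop,
        ∑ s ∈ S k, ∑ t ∈ S k, (if s < t then (μ (E s ∩ E t)).toReal else 0)
          ≤ C' * (∑ i ∈ S k, (μ (E i)).toReal) ^ 2) ∧
      (∀ δ : ℝ, 0 < δ → ∀ q₁ q₂ : ℕ, q₁ < q₂ → ∃ k₀ : ℕ, ∀ k ≥ k₀,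
        (μ ((⋃ j ∈ Finset.Icc q₁ q₂, E j) ∩ ⋃ i ∈ S k, E i)).toReal
          ≤ (1 + δ) * (μ (⋃ j ∈ Finset.Icc q₁ q₂, E j)).toReal
              * ∑ i ∈ S k, (μ (E i)).toReal)) :
    μ (limsup E atTop) = 1 := by
  set F : ℕ → Set X := fun N => ⋃ j, ⋃ (_ : N ≤ j), E j with hFdef
  have hFm : ∀ N, MeasurableSet (F N) := fun N =>
    MeasurableSet.iUnion fun j => MeasurableSet.iUnion fun _ => hE j
  -- key inequality
  have key : ∀ ε : ℝ, 0 < ε → ∀ δ : ℝ, 0 < δ → ∀ N : ℕ,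
      1 ≤ (1 + δ) * (1 + 2 * C' * ε) * (μ (F N)).toReal := by
    intro ε hε δ hδ N
    obtain ⟨εs, hεs0, hεsε, S, hmin, hbounds, hpair, hM2⟩ := h ε hε
    set m : ℕ → ℝ := fun k => ∑ i ∈ S k, (μ (E i)).toReal with hm
    set U : ℕ → Set X := fun k => ⋃ i ∈ S k, E i with hUdef
    set c : ℝ := 1 + 2 * C' * ε with hc
    have hc0 : (0:ℝ) < c := by positivity
    set Fr : ℝ := (μ (F N)).toReal with hFr
    set A : ℕ → Set X := fun q => ⋃ j ∈ Finset.Icc N q, E j with hAdef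
    set a : ℕ → ℝ := fun q => (μ (A q)).toReal with ha
    have hAF : ∀ q, A q ⊆ F N := by
      intro q x hx
      simp only [hAdef, Set.mem_iUnion] at hx
      obtain ⟨j, hj, hxj⟩ := hx
      exact Set.mem_iUnion.2 ⟨j, Set.mem_iUnion.2 ⟨(Finset.mem_Icc.mp hj).1, hxj⟩⟩
    have haF : ∀ q, a q ≤ Fr := fun q =>
      ENNReal.toReal_mono (measure_ne_top μ _) (measure_mono (hAF q))
    have ha0 : ∀ q, 0 ≤ a q := fun q => ENNReal.toReal_nonneg
    have claim : ∀ q, N < q → εs * (1 - (1 + δ) * a q * c) ≤ c * Fr - c * a q := by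
      intro q hq
      obtain ⟨k₀, hk₀⟩ := hM2 δ hδ N q hq
      obtain ⟨k, ⟨hkmin, ⟨hkεs, hkε⟩, hkpair⟩, hkM2⟩ :=
        (((hmin N).and (hbounds.and hpair)).and (eventually_atTop.2 ⟨k₀, hk₀⟩)).exists
      by_cases hcase : 0 ≤ 1 - (1 + δ) * a q * c
      swap
      · push_neg at hcase
        have h6 : 0 ≤ c * Fr - c * a q := by nlinarith [haF q, hc0]
        nlinarith [hεs0]
      -- Chung-Erdős real form
      have hrow : ∀ s, (∑ t ∈ S k, μ (E s ∩ E t)) ≠ ⊤ := fun s =>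
        (ENNReal.sum_lt_top.2 fun t _ => (measure_lt_top μ _)).ne
      have hPtop : (∑ s ∈ S k, ∑ t ∈ S k, μ (E s ∩ E t)) ≠ ⊤ :=
        (ENNReal.sum_lt_top.2 fun s _ => (hrow s).lt_top).ne
      have hce := chung_erdos μ E hE (S k)
      have hreal : m k ^ 2
          ≤ (μ (U k)).toReal * ∑ s ∈ S k, ∑ t ∈ S k, (μ (E s ∩ E t)).toReal := by
        have h1 := ENNReal.toReal_mono (ENNReal.mul_ne_top (measure_ne_top μ _) hPtop) hce
        rw [ENNReal.toReal_pow, ENNReal.toReal_sum (fun i _ => measure_ne_top μ _),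
          ENNReal.toReal_mul, ENNReal.toReal_sum (fun s _ => hrow s)] at h1
        calc m k ^ 2
            ≤ (μ (U k)).toReal * ∑ s ∈ S k, (∑ t ∈ S k, μ (E s ∩ E t)).toReal := h1
          _ = (μ (U k)).toReal * ∑ s ∈ S k, ∑ t ∈ S k, (μ (E s ∩ E t)).toReal := by
              congr 1
              exact Finset.sum_congr rfl fun s _ =>
                ENNReal.toReal_sum (fun t _ => measure_ne_top μ _)
      have hdec : ∑ s ∈ S k, ∑ t ∈ S k, (μ (E s ∩ E t)).toReal
          = ∑ s ∈ S k, (μ (E s ∩ E s)).toReal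
            + 2 * ∑ s ∈ S k, ∑ t ∈ S k, (if s < t then (μ (E s ∩ E t)).toReal else 0) :=
        pair_decomp (S k) (fun s t => (μ (E s ∩ E t)).toReal)
          (fun s t => by simp [Set.inter_comm (E s) (E t)])
      have hdiag : ∑ s ∈ S k, (μ (E s ∩ E s)).toReal = m k := by
        simp [hm, Set.inter_self]
      have hm0 : 0 < m k := lt_of_lt_of_le hεs0 hkεs
      have hPle : ∑ s ∈ S k, ∑ t ∈ S k, (μ (E s ∩ E t)).toReal ≤ m k * c := by
        rw [hdec, hdiag, hc]
        nlinarith [hkpair, mul_nonneg (mul_nonneg hC'.le hm0.le) (sub_nonneg.2 hkε)]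
      set uk : ℝ := (μ (U k)).toReal with huk
      have huk0 : (0:ℝ) ≤ uk := ENNReal.toReal_nonneg
      have hukc : m k ≤ uk * c := by
        have h2 : m k ^ 2 ≤ uk * (m k * c) :=
          le_trans hreal (mul_le_mul_of_nonneg_left hPle huk0)
        nlinarith [hm0]
      have hUm : MeasurableSet (U k) :=
        MeasurableSet.biUnion (S k).countable_toSet (fun i _ => hE i)
      have hUF : U k ⊆ F N := by
        intro x hx
        simp only [hUdef, Set.mem_iUnion] at hx
        obtain ⟨i, hi, hxi⟩ := hx
        exact Set.mem_iUnion.2 ⟨i, Set.mem_iUnion.2 ⟨hkmin i hi, hxi⟩⟩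
      have hincl : a q + uk - (μ (A q ∩ U k)).toReal ≤ Fr := by
        have h3 : μ (A q ∪ U k) + μ (A q ∩ U k) = μ (A q) + μ (U k) :=
          measure_union_add_inter _ hUm
        have h4 : (μ (A q ∪ U k)).toReal ≤ Fr :=
          ENNReal.toReal_mono (measure_ne_top μ _)
            (measure_mono (Set.union_subset (hAF q) hUF))
        have h5 := congrArg ENNReal.toReal h3
        rw [ENNReal.toReal_add (measure_ne_top μ _) (measure_ne_top μ _),
          ENNReal.toReal_add (measure_ne_top μ _) (measure_ne_top μ _)] at h5
        linarith
      have hM2' : (μ (A q ∩ U k)).toReal ≤ (1 + δ) * a q * m k := hkM2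
      nlinarith [mul_le_mul_of_nonneg_left hincl hc0.le,
        mul_le_mul_of_nonneg_left hM2' hc0.le, hukc,
        mul_le_mul_of_nonneg_right hkεs hcase, hm0, hc0,
        ENNReal.toReal_nonneg (a := μ (A q ∩ U k))]
    -- limit q → ∞
    have hmono : Monotone A := by
      intro p q hpq
      exact Set.biUnion_subset_biUnion_left (Finset.Icc_subset_Icc_right hpq)
    have hunion : ⋃ q, A q = F N := by
      ext x
      simp only [hAdef, hFdef, Set.mem_iUnion, Finset.mem_Icc]
      constructor
      · rintro ⟨q, j, ⟨hNj, _⟩, hx⟩; exact ⟨j, hNj, hx⟩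
      · rintro ⟨j, hNj, hx⟩; exact ⟨j, j, ⟨hNj, le_rfl⟩, hx⟩
    have htend : Tendsto a atTop (𝓝 Fr) := by
      have h1 := tendsto_measure_iUnion_atTop (μ := μ) hmono
      rw [hunion] at h1
      exact (ENNReal.tendsto_toReal (measure_ne_top μ _)).comp h1
    have hL : Tendsto (fun q => εs * (1 - (1 + δ) * a q * c)) atTop
        (𝓝 (εs * (1 - (1 + δ) * Fr * c))) := by
      apply Filter.Tendsto.const_mul
      exact Filter.Tendsto.const_sub _ (((htend.const_mul (1 + δ)).mul_const c))
    have hR : Tendsto (fun q => c * Fr - c * a q) atTop (𝓝 (c * Fr - c * Fr)) :=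
      tendsto_const_nhds.sub (htend.const_mul c)
    have hfin : εs * (1 - (1 + δ) * Fr * c) ≤ c * Fr - c * Fr :=
      le_of_tendsto_of_tendsto hL hR
        (eventually_atTop.2 ⟨N + 1, fun q hq => claim q (Nat.lt_of_succ_le hq)⟩)
    nlinarith [hεs0]
  -- μ (F N) = 1 for every N
  have hFone : ∀ N, μ (F N) = 1 := by
    intro N
    set t : ℝ := (μ (F N)).toReal with htd
    have hseq : ∀ n : ℕ, 1 ≤ (1 + 1/(n+1 : ℝ)) * (1 + 2*C'*(1/(n+1 : ℝ))) * t := by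
      intro n
      have hp : (0:ℝ) < 1/(n+1) := by positivity
      exact key _ hp _ hp N
    have hu : Tendsto (fun n : ℕ => 1/(n+1 : ℝ)) atTop (𝓝 0) :=
      tendsto_one_div_add_atTop_nhds_zero_nat
    have hlim : Tendsto (fun n : ℕ => (1 + 1/(n+1:ℝ)) * (1 + 2*C'*(1/(n+1:ℝ))) * t)
        atTop (𝓝 ((1+0) * (1 + 2*C'*0) * t)) :=
      Filter.Tendsto.mul_const _
        ((tendsto_const_nhds.add hu).mul (tendsto_const_nhds.add (hu.const_mul (2*C'))))
    have h1t : 1 ≤ t := by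
      have := ge_of_tendsto hlim (Eventually.of_forall hseq)
      simpa using this
    have ht1 : t ≤ 1 := by
      have h2 : (μ (F N)).toReal ≤ (1 : ℝ≥0∞).toReal :=
        ENNReal.toReal_mono ENNReal.one_ne_top prob_le_one
      simpa using h2
    have : t = 1 := le_antisymm ht1 h1t
    rwa [htd, ENNReal.toReal_eq_one_iff] at this
  have hlimsup : limsup E atTop = ⋂ N, F N := by
    rw [limsup_eq_iInf_iSup_of_nat]; rfl
  rw [hlimsup]
  refine (prob_compl_eq_zero_iff (MeasurableSet.iInter hFm)).mp ?_
  rw [Set.compl_iInter]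
  refine measure_iUnion_null fun N => ?_
  rw [measure_compl (hFm N) (measure_ne_top μ _), hFone N, measure_univ]
  simp
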